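/- In the flow conservation system of the flow-based formulation: if z ∈ {0,1}^A satisfies z_{a(n),n} = z_{n,ℓ(n)} + z_{n,r(n)} for all internal n, z_{a(n),n} = z_{n,t} for all leaves n, and z_{s,1} ≤ 1, then the support of z is either empty or forms a single directed path from s to t passing through exactly one leaf; in particular Σ_{n ∈ L} z_{n,t} = z_{s,1} ∈ {0,1}. -/

import Mathlib

def inFlow (zC : ℕ → ℕ → ℕ) (zS : ℕ) (n : ℕ) : ℕ :=
  if n = 1 then zS else zC (n / 2) n

def nextNode (zC : ℕ → ℕ → ℕ) : ℕ → ℕ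
  | 0 => 1
  | j + 1 =>
      if zC (nextNode zC j) (2 * nextNode zC j) = 1 then 2 * nextNode zC j
      else 2 * nextNode zC j + 1

lemma inFlow_le (zC : ℕ → ℕ → ℕ) (zS : ℕ) (hzC : ∀ n m, zC n m ≤ 1) (hzS : zS ≤ 1)
    (n : ℕ) : inFlow zC zS n ≤ 1 := by
  unfold inFlow; split
  · exact hzS
  · apply hzC

lemma exists_level (n : ℕ) (h1 : 1 ≤ n) : ∃ j, 2 ^ j ≤ n ∧ n ≤ 2 ^ (j + 1) - 1 := by
  refine ⟨Nat.log 2 n, Nat.pow_log_le_self 2 (by omega), ?_⟩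
  have := Nat.lt_pow_succ_log_self (by norm_num : 1 < 2) n
  omega

lemma flow_zero (d : ℕ) (zC : ℕ → ℕ → ℕ) (zS : ℕ) (hS : zS = 0)
    (hcons : ∀ n, 1 ≤ n → n ≤ 2 ^ d - 1 →
      inFlow zC zS n = zC n (2 * n) + zC n (2 * n + 1)) :
    ∀ j, j ≤ d → ∀ m, 2 ^ j ≤ m → m ≤ 2 ^ (j + 1) - 1 → inFlow zC zS m = 0 := by
  intro j
  induction j with
  | zero =>
    intro _ m h1 h2
    norm_num at h1 h2
    have : m = 1 := by omega
    subst this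
    simp [inFlow, hS]
  | succ j ih =>
    intro hjd m h1 h2
    have e1 : 2 ^ (j + 1) = 2 * 2 ^ j := by ring
    have e2 : 2 ^ (j + 2) = 4 * 2 ^ j := by ring
    have hp : 1 ≤ 2 ^ j := Nat.one_le_two_pow
    have hm1 : m ≠ 1 := by omega
    set n := m / 2 with hn
    have hn1 : 2 ^ j ≤ n := by omega
    have hn2 : n ≤ 2 ^ (j + 1) - 1 := by omega
    have hnd : n ≤ 2 ^ d - 1 := by
      have : 2 ^ (j + 1) ≤ 2 ^ d := Nat.pow_le_pow_right (by norm_num) (by omega)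
      omega
    have hc := hcons n (by omega) hnd
    rw [ih (by omega) n hn1 hn2] at hc
    have hflow : inFlow zC zS m = zC n m := by simp [inFlow, hm1, hn]
    have hchild : m = 2 * n ∨ m = 2 * n + 1 := by omega
    rw [hflow]
    rcases hchild with h | h <;> rw [h] <;> omega

lemma flow_path (d : ℕ) (zC : ℕ → ℕ → ℕ) (zS : ℕ) (hzC : ∀ n m, zC n m ≤ 1)
    (hS : zS = 1)
    (hcons : ∀ n, 1 ≤ n → n ≤ 2 ^ d - 1 →
      inFlow zC zS n = zC n (2 * n) + zC n (2 * n + 1)) :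
    ∀ j, j ≤ d → 2 ^ j ≤ nextNode zC j ∧ nextNode zC j ≤ 2 ^ (j + 1) - 1 ∧
      inFlow zC zS (nextNode zC j) = 1 := by
  intro j
  induction j with
  | zero =>
    intro _
    refine ⟨by norm_num [nextNode], by norm_num [nextNode], by simp [nextNode, inFlow, hS]⟩
  | succ j ih =>
    intro hjd
    obtain ⟨h1, h2, h3⟩ := ih (by omega)
    set q := nextNode zC j with hq
    have e1 : 2 ^ (j + 1) = 2 * 2 ^ j := by ring
    have e2 : 2 ^ (j + 2) = 4 * 2 ^ j := by ring
    have hp : 1 ≤ 2 ^ j := Nat.one_le_two_pow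
    have hq1 : 1 ≤ q := by omega
    have hqd : q ≤ 2 ^ d - 1 := by
      have : 2 ^ (j + 1) ≤ 2 ^ d := Nat.pow_le_pow_right (by norm_num) (by omega)
      omega
    have hc := hcons q hq1 hqd
    rw [h3] at hc
    have hdef : nextNode zC (j + 1) =
        if zC q (2 * q) = 1 then 2 * q else 2 * q + 1 := rfl
    by_cases hcase : zC q (2 * q) = 1
    · rw [hdef, if_pos hcase]
      refine ⟨by omega, by omega, ?_⟩
      have hne : ¬(2 * q = 1) := by omega
      simp only [inFlow, if_neg hne]
      rw [show 2 * q / 2 = q from by omega]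
      exact hcase
    · rw [hdef, if_neg hcase]
      have hb : zC q (2 * q + 1) = 1 := by have := hzC q (2 * q); omega
      refine ⟨by omega, by omega, ?_⟩
      have hne : ¬(2 * q + 1 = 1) := by omega
      simp only [inFlow, if_neg hne]
      rw [show (2 * q + 1) / 2 = q from by omega]
      exact hb

lemma flow_uniq (d : ℕ) (zC : ℕ → ℕ → ℕ) (zS : ℕ) (hzC : ∀ n m, zC n m ≤ 1)
    (hzS : zS ≤ 1) (hS : zS = 1)
    (hcons : ∀ n, 1 ≤ n → n ≤ 2 ^ d - 1 →
      inFlow zC zS n = zC n (2 * n) + zC n (2 * n + 1)) :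
    ∀ j, j ≤ d → ∀ m, 2 ^ j ≤ m → m ≤ 2 ^ (j + 1) - 1 → inFlow zC zS m = 1 →
      m = nextNode zC j := by
  intro j
  induction j with
  | zero =>
    intro _ m h1 h2 _
    norm_num at h1 h2
    show m = 1
    omega
  | succ j ih =>
    intro hjd m h1 h2 hm
    have e1 : 2 ^ (j + 1) = 2 * 2 ^ j := by ring
    have e2 : 2 ^ (j + 2) = 4 * 2 ^ j := by ring
    have hp : 1 ≤ 2 ^ j := Nat.one_le_two_pow
    have hm1 : m ≠ 1 := by omega
    set n := m / 2 with hn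
    have hmflow : zC n m = 1 := by simpa [inFlow, hm1] using hm
    have hn1 : 2 ^ j ≤ n := by omega
    have hn2 : n ≤ 2 ^ (j + 1) - 1 := by omega
    have hnd : n ≤ 2 ^ d - 1 := by
      have : 2 ^ (j + 1) ≤ 2 ^ d := Nat.pow_le_pow_right (by norm_num) (by omega)
      omega
    have hc := hcons n (by omega) hnd
    have hinle := inFlow_le zC zS hzC hzS n
    have hchild : m = 2 * n ∨ m = 2 * n + 1 := by omega
    have hone : inFlow zC zS n = 1 := by
      rcases hchild with h | h <;> rw [h] at hmflow <;> omega
    have hnp : n = nextNode zC j := ih (by omega) n hn1 hn2 hone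
    rw [hone] at hc
    have hdef : nextNode zC (j + 1) =
        if zC (nextNode zC j) (2 * nextNode zC j) = 1 then 2 * nextNode zC j
        else 2 * nextNode zC j + 1 := rfl
    rw [← hnp] at hdef
    by_cases hA : zC n (2 * n) = 1
    · have hB : zC n (2 * n + 1) = 0 := by omega
      have hm2 : m = 2 * n := by
        rcases hchild with h | h
        · exact h
        · rw [h] at hmflow; omega
      rw [hdef, if_pos hA, hm2]
    · have hA0 : zC n (2 * n) = 0 := by have := hzC n (2 * n); omega
      have hm2 : m = 2 * n + 1 := by
        rcases hchild with h | h
        · rw [h] at hmflow; omega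
        · exact h
      rw [hdef, if_neg hA, hm2]

/-- If `z ∈ {0,1}^A` satisfies the flow conservation constraints of the flow-based
formulation on the balanced depth-`d` tree (`z_{a(n),n} = z_{n,ℓ(n)} + z_{n,r(n)}` at
internal nodes, `z_{a(n),n} = z_{n,t}` at leaves, `z_{s,1} ≤ 1`), then the support of
`z` is either empty or a single directed `s`–`t` path through exactly one leaf; in
particular `∑_{n ∈ L} z_{n,t} = z_{s,1} ∈ {0,1}`. -/
theorem conservation_support_is_path (d : ℕ) (zC : ℕ → ℕ → ℕ) (zT : ℕ → ℕ) (zS : ℕ)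
    (hzC : ∀ n m, zC n m ≤ 1) (hzT : ∀ n, zT n ≤ 1) (hzS : zS ≤ 1)
    (hcons : ∀ n, 1 ≤ n → n ≤ 2 ^ d - 1 →
      (if n = 1 then zS else zC (n / 2) n) = zC n (2 * n) + zC n (2 * n + 1))
    (hleaf : ∀ n, 2 ^ d ≤ n → n ≤ 2 ^ (d + 1) - 1 →
      (if n = 1 then zS else zC (n / 2) n) = zT n) :
    (∑ n ∈ Finset.Icc (2 ^ d) (2 ^ (d + 1) - 1), zT n) = zS ∧ zS ≤ 1 ∧
    (zS = 0 →
      (∀ n, 1 ≤ n → n ≤ 2 ^ d - 1 → zC n (2 * n) = 0 ∧ zC n (2 * n + 1) = 0) ∧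
      (∀ n, 2 ^ d ≤ n → n ≤ 2 ^ (d + 1) - 1 → zT n = 0)) ∧
    (zS = 1 → ∃ p : ℕ → ℕ, p 0 = 1 ∧
      (∀ j < d, (p (j + 1) = 2 * p j ∨ p (j + 1) = 2 * p j + 1) ∧
        zC (p j) (p (j + 1)) = 1) ∧
      zT (p d) = 1 ∧
      (∀ n, 1 ≤ n → n ≤ 2 ^ d - 1 → ∀ m, (m = 2 * n ∨ m = 2 * n + 1) →
        zC n m = 1 → ∃ j < d, p j = n ∧ p (j + 1) = m) ∧
      (∀ n, 2 ^ d ≤ n → n ≤ 2 ^ (d + 1) - 1 → zT n = 1 → n = p d)) := by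
  have hcons' : ∀ n, 1 ≤ n → n ≤ 2 ^ d - 1 →
      inFlow zC zS n = zC n (2 * n) + zC n (2 * n + 1) := hcons
  have hleaf' : ∀ n, 2 ^ d ≤ n → n ≤ 2 ^ (d + 1) - 1 → inFlow zC zS n = zT n := hleaf
  -- helper: level of an internal node
  have hlevel : ∀ n, 1 ≤ n → n ≤ 2 ^ d - 1 →
      ∃ j, j < d ∧ 2 ^ j ≤ n ∧ n ≤ 2 ^ (j + 1) - 1 := by
    intro n h1 h2
    obtain ⟨j, hj1, hj2⟩ := exists_level n h1
    refine ⟨j, ?_, hj1, hj2⟩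
    by_contra hjd
    have : 2 ^ d ≤ 2 ^ j := Nat.pow_le_pow_right (by norm_num) (by omega)
    omega
  refine ⟨?_, hzS, ?_, ?_⟩
  · -- the sum
    interval_cases zS
    · apply Finset.sum_eq_zero
      intro n hn
      rw [Finset.mem_Icc] at hn
      rw [← hleaf' n hn.1 hn.2]
      exact flow_zero d zC 0 rfl hcons' d le_rfl n hn.1 hn.2
    · obtain ⟨h1, h2, h3⟩ := flow_path d zC 1 hzC rfl hcons' d le_rfl
      rw [Finset.sum_eq_single_of_mem (nextNode zC d) (Finset.mem_Icc.mpr ⟨h1, h2⟩)]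
      · rw [← hleaf' _ h1 h2, h3]
      · intro b hb hbne
        rw [Finset.mem_Icc] at hb
        have hle := inFlow_le zC 1 hzC le_rfl b
        have hne : inFlow zC 1 b ≠ 1 := fun h =>
          hbne (flow_uniq d zC 1 hzC le_rfl rfl hcons' d le_rfl b hb.1 hb.2 h)
        rw [← hleaf' b hb.1 hb.2]
        omega
  · -- zS = 0
    intro h0
    subst h0
    constructor
    · intro n h1 h2
      obtain ⟨j, hjd, hj1, hj2⟩ := hlevel n h1 h2
      have hz := flow_zero d zC 0 rfl hcons' j (by omega) n hj1 hj2
      have hc := hcons' n h1 h2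
      omega
    · intro n h1 h2
      rw [← hleaf' n h1 h2]
      exact flow_zero d zC 0 rfl hcons' d le_rfl n h1 h2
  · -- zS = 1
    intro h1
    subst h1
    have hpath := flow_path d zC 1 hzC rfl hcons'
    have huniq := flow_uniq d zC 1 hzC le_rfl rfl hcons'
    refine ⟨nextNode zC, rfl, ?_, ?_, ?_, ?_⟩
    · intro j hj
      obtain ⟨a1, a2, a3⟩ := hpath (j + 1) (by omega)
      obtain ⟨b1, b2, b3⟩ := hpath j (by omega)
      have hp : 1 ≤ 2 ^ j := Nat.one_le_two_pow
      have hq1 : 1 ≤ nextNode zC j := by omega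
      have hdef : nextNode zC (j + 1) =
          if zC (nextNode zC j) (2 * nextNode zC j) = 1 then 2 * nextNode zC j
          else 2 * nextNode zC j + 1 := rfl
      have hchild : nextNode zC (j + 1) = 2 * nextNode zC j ∨
          nextNode zC (j + 1) = 2 * nextNode zC j + 1 := by
        rw [hdef]; split
        · left; rfl
        · right; rfl
      refine ⟨hchild, ?_⟩
      have hne : nextNode zC (j + 1) ≠ 1 := by omega
      have hdiv : nextNode zC (j + 1) / 2 = nextNode zC j := by omega
      simpa [inFlow, hne, hdiv] using a3
    · obtain ⟨a1, a2, a3⟩ := hpath d le_rfl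
      rw [← hleaf' _ a1 a2, a3]
    · intro n h1n h2n m hm hzm
      obtain ⟨j, hjd, hj1, hj2⟩ := hlevel n h1n h2n
      have e1 : 2 ^ (j + 1) = 2 * 2 ^ j := by ring
      have e2 : 2 ^ (j + 2) = 4 * 2 ^ j := by ring
      have hp : 1 ≤ 2 ^ j := Nat.one_le_two_pow
      have hmne : m ≠ 1 := by omega
      have hmdiv : m / 2 = n := by omega
      have hmflow : inFlow zC 1 m = 1 := by
        simp only [inFlow, if_neg hmne, hmdiv]; exact hzm
      have hm1 : 2 ^ (j + 1) ≤ m := by omega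
      have hm2 : m ≤ 2 ^ (j + 2) - 1 := by omega
      have hmeq := huniq (j + 1) (by omega) m hm1 hm2 hmflow
      refine ⟨j, hjd, ?_, hmeq.symm⟩
      obtain ⟨b1, b2, b3⟩ := hpath j (by omega)
      have hdef : nextNode zC (j + 1) =
          if zC (nextNode zC j) (2 * nextNode zC j) = 1 then 2 * nextNode zC j
          else 2 * nextNode zC j + 1 := rfl
      have hchild : nextNode zC (j + 1) = 2 * nextNode zC j ∨
          nextNode zC (j + 1) = 2 * nextNode zC j + 1 := by
        rw [hdef]; split
        · left; rfl
        · right; rfl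
      omega
    · intro n h1n h2n hzn
      have : inFlow zC 1 n = 1 := by rw [hleaf' n h1n h2n]; exact hzn
      exact huniq d le_rfl n h1n h2n this
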